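/- Let E be a measurable set of finite measure, 1 < p < ∞, and let (u_n) be a sequence in L^p(E) that converges in measure to a function u and is bounded in the L^p norm by a constant C. Then u ∈ L^p(E) and for every q with 1 ≤ q < p, the sequence u_n converges to u strongly in L^q(E), i.e. lim_{n→∞} ‖u_n − u‖_{L^q(E)} = 0. -/

import Mathlib

open ENNReal NNReal MeasureTheory Filter

/-- Key truncation estimate: if `‖f‖_{L^p} ≤ C` then the `L^q`-norm of the truncation of
`f` to the set where `‖f‖ ≥ M` is at most `(M ^ (q - p) * C ^ p) ^ (1/q)`. -/
lemma aux_trunc {X : Type*} [MeasurableSpace X] (ν : MeasureTheory.Measure X)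
    {p q : ℝ≥0∞} (hq1 : 1 ≤ q) (hqp : q < p) (hp2 : p < ⊤)
    (f : X → ℝ) (C : ℝ≥0) (hf : eLpNorm f p ν ≤ C) (M : ℝ≥0) (hM : M ≠ 0) :
    eLpNorm ({x | M ≤ ‖f x‖₊}.indicator f) q ν ≤
      ((M : ℝ≥0∞) ^ (q.toReal - p.toReal) * (C : ℝ≥0∞) ^ p.toReal) ^ (1 / q.toReal) := by
  have hq0 : q ≠ 0 := by positivity
  have hqtop : q ≠ ⊤ := (hqp.trans hp2).ne
  have hp0 : p ≠ 0 := (lt_trans zero_lt_one (lt_of_le_of_lt hq1 hqp)).ne'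
  have hptop : p ≠ ⊤ := hp2.ne
  set qr := q.toReal with hqr
  set pr := p.toReal with hpr
  have hqr_pos : 0 < qr := ENNReal.toReal_pos hq0 hqtop
  have hpr_pos : 0 < pr := ENNReal.toReal_pos (by positivity) hptop
  have hlt : qr < pr := ENNReal.toReal_strict_mono hptop hqp
  -- pointwise estimate
  have hpt : ∀ x, (‖({x | M ≤ ‖f x‖₊}.indicator f) x‖₊ : ℝ≥0∞) ^ qr ≤
      (M : ℝ≥0∞) ^ (qr - pr) * (‖f x‖₊ : ℝ≥0∞) ^ pr := by
    intro x
    by_cases hx : x ∈ {x | M ≤ ‖f x‖₊}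
    · rw [Set.indicator_of_mem hx]
      have hMa : (M : ℝ≥0∞) ≤ (‖f x‖₊ : ℝ≥0∞) := ENNReal.coe_le_coe.2 hx
      have ha0' : (‖f x‖₊ : ℝ≥0∞) ≠ 0 := fun h => hM (by simpa [h] using hMa)
      have hatop : (‖f x‖₊ : ℝ≥0∞) ≠ ⊤ := ENNReal.coe_ne_top
      have key : (‖f x‖₊ : ℝ≥0∞) ^ qr = (‖f x‖₊ : ℝ≥0∞) ^ (qr - pr) * (‖f x‖₊ : ℝ≥0∞) ^ pr := by
        rw [← ENNReal.rpow_add _ _ ha0' hatop]; ring_nf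
      rw [key]
      gcongr ?_ * _
      rw [show qr - pr = -(pr - qr) by ring, ENNReal.rpow_neg, ENNReal.rpow_neg]
      exact ENNReal.inv_le_inv.2 (ENNReal.rpow_le_rpow hMa (by linarith))
    · rw [Set.indicator_of_notMem hx]
      simp [ENNReal.zero_rpow_of_pos hqr_pos]
  -- integral estimate
  have hint : ∫⁻ x, (‖f x‖₊ : ℝ≥0∞) ^ pr ∂ν ≤ (C : ℝ≥0∞) ^ pr := by
    have := ENNReal.rpow_le_rpow hf hpr_pos.le
    rwa [eLpNorm_eq_lintegral_rpow_enorm_toReal hp0 hptop, ← ENNReal.rpow_mul,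
      one_div, inv_mul_cancel₀ hpr_pos.ne', ENNReal.rpow_one] at this
  calc eLpNorm ({x | M ≤ ‖f x‖₊}.indicator f) q ν
      = (∫⁻ x, (‖({x | M ≤ ‖f x‖₊}.indicator f) x‖₊ : ℝ≥0∞) ^ qr ∂ν) ^ (1 / qr) :=
        eLpNorm_eq_lintegral_rpow_enorm_toReal hq0 hqtop
    _ ≤ (∫⁻ x, (M : ℝ≥0∞) ^ (qr - pr) * (‖f x‖₊ : ℝ≥0∞) ^ pr ∂ν) ^ (1 / qr) := by
        exact ENNReal.rpow_le_rpow (MeasureTheory.lintegral_mono hpt) (by positivity)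
    _ = ((M : ℝ≥0∞) ^ (qr - pr) * ∫⁻ x, (‖f x‖₊ : ℝ≥0∞) ^ pr ∂ν) ^ (1 / qr) := by
        rw [MeasureTheory.lintegral_const_mul' _ _ (by rw [← ENNReal.coe_rpow_of_ne_zero hM]; exact ENNReal.coe_ne_top)]
    _ ≤ ((M : ℝ≥0∞) ^ (qr - pr) * (C : ℝ≥0∞) ^ pr) ^ (1 / qr) := by gcongr

/-- Corollary A.2: convergence in measure plus a uniform `L^p` bound on a finite
measure set implies membership in `L^p` and strong convergence in `L^q` for every
`1 ≤ q < p`. -/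
theorem stmt0 {X : Type*} [MeasurableSpace X] (μ : Measure X)
    (E : Set X) (hE : MeasurableSet E) (hEfin : μ E < ⊤)
    (p : ℝ≥0∞) (hp1 : 1 < p) (hp2 : p < ⊤)
    (u : ℕ → X → ℝ) (v : X → ℝ)
    (hum : ∀ n, AEStronglyMeasurable (u n) (μ.restrict E))
    (hvm : AEStronglyMeasurable v (μ.restrict E))
    (hconv : TendstoInMeasure (μ.restrict E) u atTop v)
    (C : ℝ≥0) (hbound : ∀ n, eLpNorm (u n) p (μ.restrict E) ≤ C) :
    MemLp v p (μ.restrict E) ∧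
      ∀ q : ℝ≥0∞, 1 ≤ q → q < p →
        Tendsto (fun n => eLpNorm (u n - v) q (μ.restrict E)) atTop (nhds 0) := by
  set ν := μ.restrict E with hν
  have hνfin : IsFiniteMeasure ν := ⟨by rwa [Measure.restrict_apply_univ]⟩
  -- v ∈ L^p
  have hvp : MemLp v p ν := by
    obtain ⟨ns, hns_mono, hae⟩ := hconv.exists_seq_tendsto_ae
    refine ⟨hvm, ?_⟩
    have h1 : eLpNorm v p ν ≤ atTop.liminf fun i => eLpNorm (u (ns i)) p ν :=
      Lp.eLpNorm_lim_le_liminf_eLpNorm (fun i => hum (ns i)) v hae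
    have h2 : atTop.liminf (fun i => eLpNorm (u (ns i)) p ν) ≤ (C : ℝ≥0∞) := by
      refine Filter.liminf_le_of_frequently_le (Filter.Frequently.of_forall fun i => hbound _)
    exact (h1.trans h2).trans_lt ENNReal.coe_lt_top
  refine ⟨hvp, fun q hq1 hqp => ?_⟩
  have hq0 : q ≠ 0 := (lt_of_lt_of_le zero_lt_one hq1).ne'
  have hqtop : q ≠ ⊤ := (hqp.trans hp2).ne
  -- uniform integrability in L^q
  have hui : UnifIntegrable u q ν := by
    refine unifIntegrable_of hq1 hqtop hum fun ε hε => ?_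
    set qr := q.toReal
    set pr := p.toReal
    have hqr_pos : 0 < qr := ENNReal.toReal_pos hq0 hqtop
    have hpr_pos : 0 < pr := ENNReal.toReal_pos (lt_trans zero_lt_one hp1).ne' hp2.ne
    have hlt : qr < pr := ENNReal.toReal_strict_mono hp2.ne hqp
    by_cases hC : C = 0
    · refine ⟨1, fun i => ?_⟩
      refine (aux_trunc ν hq1 hqp hp2 (u i) C (hbound i) 1 one_ne_zero).trans ?_
      rw [hC]
      simp only [ENNReal.coe_zero, ENNReal.zero_rpow_of_pos (y := p.toReal) hpr_pos, mul_zero]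
      rw [ENNReal.zero_rpow_of_pos (y := 1/q.toReal) (one_div_pos.2 hqr_pos)]
      exact zero_le
    · set εnn : ℝ≥0 := ε.toNNReal with hεnn
      have hεnn0 : εnn ≠ 0 := by simp [hεnn, Real.toNNReal_eq_zero, not_le, hε]
      set M : ℝ≥0 := (C ^ pr / εnn ^ qr) ^ (1 / (pr - qr)) with hMdef
      have hM0 : M ≠ 0 := by
        have : C ^ pr / εnn ^ qr ≠ 0 := by
          apply div_ne_zero
          · exact (NNReal.rpow_pos (pos_iff_ne_zero.2 hC)).ne'
          · exact (NNReal.rpow_pos (pos_iff_ne_zero.2 hεnn0)).ne'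
        simpa [hMdef] using (NNReal.rpow_pos (pos_iff_ne_zero.2 this)).ne'
      refine ⟨M, fun i => ?_⟩
      refine (aux_trunc ν hq1 hqp hp2 (u i) C (hbound i) M hM0).trans ?_
      have hcalc : (M : ℝ≥0∞) ^ (qr - pr) * (C : ℝ≥0∞) ^ pr = (εnn : ℝ≥0∞) ^ qr := by
        rw [← ENNReal.coe_rpow_of_ne_zero hM0, ← ENNReal.coe_rpow_of_nonneg _ hpr_pos.le,
          ← ENNReal.coe_rpow_of_nonneg _ hqr_pos.le, ← ENNReal.coe_mul, ENNReal.coe_inj]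
        have hMval : M ^ (pr - qr) = C ^ pr / εnn ^ qr := by
          rw [hMdef, ← NNReal.rpow_mul, one_div, inv_mul_cancel₀ (by linarith : pr - qr ≠ 0),
            NNReal.rpow_one]
        have : M ^ (qr - pr) = (C ^ pr / εnn ^ qr)⁻¹ := by
          rw [show qr - pr = -(pr - qr) by ring, NNReal.rpow_neg, hMval]
        rw [this, inv_div]
        rw [div_mul_cancel₀]
        exact (NNReal.rpow_pos (pos_iff_ne_zero.2 hC)).ne'
      rw [hcalc, ← ENNReal.rpow_mul, mul_one_div, div_self hqr_pos.ne', ENNReal.rpow_one]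
      exact le_of_eq (by simp [hεnn, ENNReal.ofReal])
  -- conclude by Vitali
  have hvq : MemLp v q ν := hvp.mono_exponent hqp.le
  exact tendsto_Lp_finite_of_tendstoInMeasure hq1 hqtop hum hvq hui hconv
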